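/- arXiv:1510.03129 — 2 statements merged into one kernel-verified Lean document; each statement's English description precedes it below -/
import Mathlib

section
/- Let p be an odd prime, k ≥ 1, and a, b ∈ E_p with b ≠ 1, where E_p = {x ∈ Q_p : |x|_p = 1, |x−1|_p ≤ 1/p}. Then the function f(u) = a²((b²u + 1)/(u + b²))^k has exactly one fixed point u in Q_p satisfying u ∈ E_p. -/
def Ep (p : ℕ) [Fact p.Prime] : Set ℚ_[p] :=
  {x | ‖x‖ = 1 ∧ ‖x - 1‖ ≤ 1 / (p : ℝ)}

namespace EpAux

variable {p : ℕ} [Fact p.Prime]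

lemma p_pos : (0:ℝ) < (p:ℝ) := by
  exact_mod_cast (Fact.out : p.Prime).pos

lemma inv_p_lt_one : 1 / (p:ℝ) < 1 := by
  have h2 : (2:ℝ) ≤ (p:ℝ) := by exact_mod_cast (Fact.out : p.Prime).two_le
  rw [div_lt_one p_pos]; linarith

lemma inv_p_le_one : 1 / (p:ℝ) ≤ 1 := le_of_lt inv_p_lt_one

lemma norm_two (hp : p ≠ 2) : ‖(2 : ℚ_[p])‖ = 1 := by
  have h1 : ‖((2:ℤ) : ℚ_[p])‖ ≤ 1 := Padic.norm_int_le_one 2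
  have h2 : ¬ ‖((2:ℤ) : ℚ_[p])‖ < 1 := by
    rw [Padic.norm_intCast_lt_one_iff]
    intro hd
    have hd' : p ∣ 2 := by exact_mod_cast hd
    have := (Nat.prime_dvd_prime_iff_eq (Fact.out : p.Prime) Nat.prime_two).mp hd'
    exact hp this
  have : ‖((2:ℤ) : ℚ_[p])‖ = 1 := le_antisymm h1 (not_lt.mp h2)
  simpa using this

lemma one_mem : (1 : ℚ_[p]) ∈ Ep p := by
  constructor
  · simp
  · simp [le_of_lt (div_pos one_pos p_pos)]

lemma mul_mem {x y : ℚ_[p]} (hx : x ∈ Ep p) (hy : y ∈ Ep p) : x * y ∈ Ep p := by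
  obtain ⟨hx1, hx2⟩ := hx
  obtain ⟨hy1, hy2⟩ := hy
  constructor
  · rw [norm_mul, hx1, hy1, mul_one]
  · have : x * y - 1 = x * (y - 1) + (x - 1) := by ring
    rw [this]
    refine le_trans (Padic.nonarchimedean _ _) (max_le ?_ hx2)
    rw [norm_mul, hx1, one_mul]; exact hy2

lemma pow_mem {x : ℚ_[p]} (hx : x ∈ Ep p) (n : ℕ) : x ^ n ∈ Ep p := by
  induction n with
  | zero => simpa using one_mem
  | succ n ih => rw [pow_succ]; exact mul_mem ih hx

/-- sum of two elements of `Ep` has norm `1` (for `p ≠ 2`). -/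
lemma norm_add_eq_one (hp : p ≠ 2) {x y : ℚ_[p]} (hx : x ∈ Ep p) (hy : y ∈ Ep p) :
    ‖x + y‖ = 1 := by
  have hxy : x + y = ((x - 1) + (y - 1)) + 2 := by ring
  have h1 : ‖(x - 1) + (y - 1)‖ ≤ 1 / (p:ℝ) :=
    le_trans (Padic.nonarchimedean _ _) (max_le hx.2 hy.2)
  have hne : ‖(x - 1) + (y - 1)‖ ≠ ‖(2 : ℚ_[p])‖ := by
    rw [norm_two hp]
    exact ne_of_lt (lt_of_le_of_lt h1 inv_p_lt_one)
  rw [hxy, Padic.add_eq_max_of_ne hne, norm_two hp]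
  exact max_eq_right (le_trans h1 inv_p_le_one)

lemma pow_sub_pow_norm_le {x y : ℚ_[p]} (hx : ‖x‖ ≤ 1) (hy : ‖y‖ ≤ 1) (n : ℕ) :
    ‖x ^ n - y ^ n‖ ≤ ‖x - y‖ := by
  induction n with
  | zero => simp
  | succ n ih =>
      have hxy : x ^ (n+1) - y ^ (n+1) = x * (x ^ n - y ^ n) + (x - y) * y ^ n := by ring
      rw [hxy]
      refine le_trans (Padic.nonarchimedean _ _) (max_le ?_ ?_)
      · rw [norm_mul]
        calc ‖x‖ * ‖x ^ n - y ^ n‖ ≤ 1 * ‖x - y‖ :=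
              mul_le_mul hx ih (norm_nonneg _) zero_le_one
          _ = ‖x - y‖ := one_mul _
      · rw [norm_mul]
        calc ‖x - y‖ * ‖y ^ n‖ ≤ ‖x - y‖ * 1 := by
              refine mul_le_mul_of_nonneg_left ?_ (norm_nonneg _)
              rw [norm_pow]; exact pow_le_one₀ (norm_nonneg _) hy
          _ = ‖x - y‖ := mul_one _

end EpAux

theorem f_unique_fixed_point_in_Ep (p : ℕ) [Fact p.Prime] (hp : p ≠ 2)
    (k : ℕ) (hk : 1 ≤ k) (a b : ℚ_[p]) (ha : a ∈ Ep p) (hb : b ∈ Ep p)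
    (hb1 : b ≠ 1) :
    ∃! u : ℚ_[p], u ∈ Ep p ∧
      a ^ 2 * ((b ^ 2 * u + 1) / (u + b ^ 2)) ^ k = u := by
  open EpAux in
  -- basic facts
  have hb2 : b ^ 2 ∈ Ep p := pow_mem hb 2
  have ha2 : a ^ 2 ∈ Ep p := pow_mem ha 2
  have hb4 : ‖b ^ 2 * b ^ 2 - 1‖ ≤ 1 / (p:ℝ) := (mul_mem hb2 hb2).2
  -- g u := (b^2*u+1)/(u+b^2)
  set g : ℚ_[p] → ℚ_[p] := fun u => (b ^ 2 * u + 1) / (u + b ^ 2) with hg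
  set f : ℚ_[p] → ℚ_[p] := fun u => a ^ 2 * g u ^ k with hf
  have hden : ∀ u ∈ Ep p, ‖u + b ^ 2‖ = 1 := fun u hu => norm_add_eq_one hp hu hb2
  have hden0 : ∀ u ∈ Ep p, u + b ^ 2 ≠ 0 := by
    intro u hu h0
    have := hden u hu
    rw [h0] at this; simp at this
  have hnum : ∀ u ∈ Ep p, ‖b ^ 2 * u + 1‖ = 1 := fun u hu =>
    norm_add_eq_one hp (mul_mem hb2 hu) one_mem
  -- g maps Ep to Ep
  have hgmem : ∀ u ∈ Ep p, g u ∈ Ep p := by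
    intro u hu
    constructor
    · rw [hg]; simp only [norm_div, hnum u hu, hden u hu, div_one]
    · have key : g u - 1 = (b ^ 2 - 1) * (u - 1) / (u + b ^ 2) := by
        show (b ^ 2 * u + 1) / (u + b ^ 2) - 1 = _
        rw [div_sub_one (hden0 u hu)]
        congr 1
        ring
      rw [key, norm_div, hden u hu, div_one, norm_mul]
      have h1 : ‖b ^ 2 - 1‖ ≤ 1 / (p:ℝ) := hb2.2
      have h2 : ‖u - 1‖ ≤ 1 := le_trans hu.2 inv_p_le_one
      calc ‖b ^ 2 - 1‖ * ‖u - 1‖ ≤ (1 / (p:ℝ)) * 1 :=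
            mul_le_mul h1 h2 (norm_nonneg _) (le_of_lt (div_pos one_pos p_pos))
        _ = 1 / (p:ℝ) := mul_one _
  -- f maps Ep to Ep
  have hfmem : ∀ u ∈ Ep p, f u ∈ Ep p := fun u hu =>
    mul_mem ha2 (pow_mem (hgmem u hu) k)
  -- contraction estimate
  have hcontr : ∀ u ∈ Ep p, ∀ v ∈ Ep p, ‖f u - f v‖ ≤ (1 / (p:ℝ)) * ‖u - v‖ := by
    intro u hu v hv
    have hgd : g u - g v = (b ^ 2 * b ^ 2 - 1) * (u - v) / ((u + b ^ 2) * (v + b ^ 2)) := by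
      show (b ^ 2 * u + 1) / (u + b ^ 2) - (b ^ 2 * v + 1) / (v + b ^ 2) = _
      rw [div_sub_div _ _ (hden0 u hu) (hden0 v hv)]
      congr 1
      ring
    have hgnorm : ‖g u - g v‖ ≤ (1 / (p:ℝ)) * ‖u - v‖ := by
      rw [hgd, norm_div, norm_mul, norm_mul, hden u hu, hden v hv,
        mul_one, div_one]
      exact mul_le_mul_of_nonneg_right hb4 (norm_nonneg _)
    have hfd : f u - f v = a ^ 2 * (g u ^ k - g v ^ k) := by rw [hf]; ring
    rw [hfd, norm_mul, ha2.1, one_mul]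
    exact le_trans
      (pow_sub_pow_norm_le (le_of_eq (hgmem u hu).1) (le_of_eq (hgmem v hv).1) k) hgnorm
  -- Ep is closed, hence complete
  have hclosed : IsClosed (Ep p) := by
    have : Ep p = {x : ℚ_[p] | ‖x‖ = 1} ∩ {x : ℚ_[p] | ‖x - 1‖ ≤ 1 / (p:ℝ)} := rfl
    rw [this]
    exact IsClosed.inter (isClosed_eq continuous_norm continuous_const)
      (isClosed_le (continuous_norm.comp (continuous_id.sub continuous_const))
        continuous_const)
    
  haveI : CompleteSpace (Ep p) := hclosed.completeSpace_coe
  haveI : Nonempty (Ep p) := ⟨⟨1, one_mem⟩⟩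
  -- the restricted map
  set F : Ep p → Ep p := fun u => ⟨f u.1, hfmem u.1 u.2⟩ with hF
  have hK1 : ((p : NNReal)⁻¹ : NNReal) < 1 := by
    have h1 : (1 : NNReal) < (p : NNReal) := by
      exact_mod_cast (Fact.out : p.Prime).one_lt
    exact inv_lt_one_of_one_lt₀ h1
  have hlip : LipschitzWith (p : NNReal)⁻¹ F := by
    apply LipschitzWith.of_dist_le_mul
    intro x y
    have : dist (F x) (F y) = ‖f x.1 - f y.1‖ := by
      rw [Subtype.dist_eq, dist_eq_norm]
    rw [this]
    have hd : dist x y = ‖x.1 - y.1‖ := by rw [Subtype.dist_eq, dist_eq_norm]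
    rw [hd]
    have hc : ((p : NNReal)⁻¹ : ℝ) = 1 / (p : ℝ) := by
      simp
    rw [NNReal.coe_inv, hc]
    exact hcontr x.1 x.2 y.1 y.2
  have hCW : ContractingWith (p : NNReal)⁻¹ F := ⟨hK1, hlip⟩
  obtain ⟨x, hx⟩ := hCW.exists_fixedPoint (Classical.choice ‹Nonempty (Ep p)›)
    (edist_ne_top _ _)
  refine ⟨x.1, ⟨x.2, ?_⟩, ?_⟩
  · have := hx.1
    exact congrArg Subtype.val this
  · rintro v ⟨hv, hveq⟩
    have hvfix : Function.IsFixedPt F ⟨v, hv⟩ := by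
      apply Subtype.ext
      exact hveq
    have hxfix : Function.IsFixedPt F x := hx.1
    have := hCW.fixedPoint_unique' hvfix hxfix
    exact congrArg Subtype.val this
end

section
/- Let p be an odd prime, k ≥ 1, and a, b ∈ E_p with b ≠ 1. Suppose (u₁, u₂, u₃) ∈ Q_p³ is a solution of the system u₁ = a²((b²u₃+1)/(u₃+b²))^k, u₂ = a²((b²u₂+1)u₃/((u₃+b²)u₁))^k, u₃ = a²((b²u₃+1)u₁/((u₂+b²)u₃))^k, and suppose u₃ ∉ −E_p. Then (u₁, u₂, u₃) ∈ E_p × E_p × E_p. -/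
section helpers
variable (p : ℕ) [Fact p.Prime]

lemma hp_one_lt : (1:ℝ) < p := by exact_mod_cast (Fact.out : p.Prime).one_lt

lemma inv_p_pos : 0 < 1/(p:ℝ) := by
  have := hp_one_lt p
  have : (0:ℝ) < p := by linarith
  positivity

lemma inv_p_lt_one : 1/(p:ℝ) < 1 := by
  rw [div_lt_one (lt_trans one_pos (hp_one_lt p))]; exact hp_one_lt p

lemma padic_norm_dichotomy (x : ℚ_[p]) (h : ‖x‖ < 1) : ‖x‖ ≤ 1/(p:ℝ) := by
  have h0 : ‖x‖ < (p:ℝ) ^ (0:ℤ) := by simpa using h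
  have := (Padic.norm_lt_pow_iff_norm_le_pow_sub_one x 0).mp h0
  have hz : ((p:ℝ) ^ ((0:ℤ) - 1)) = 1/(p:ℝ) := by
    norm_num [zpow_neg]
  rwa [hz] at this

lemma Ep_one : (1:ℚ_[p]) ∈ Ep p := by
  constructor
  · simp
  · simp only [sub_self, norm_zero]
    exact le_of_lt (inv_p_pos p)

lemma Ep_mul {x y : ℚ_[p]} (hx : x ∈ Ep p) (hy : y ∈ Ep p) : x * y ∈ Ep p := by
  obtain ⟨hx1, hx2⟩ := hx
  obtain ⟨hy1, hy2⟩ := hy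
  constructor
  · rw [norm_mul, hx1, hy1, one_mul]
  · have : x * y - 1 = x * (y - 1) + (x - 1) := by ring
    rw [this]
    refine le_trans (Padic.nonarchimedean _ _) (max_le ?_ hx2)
    rw [norm_mul, hx1, one_mul]; exact hy2

lemma Ep_pow {x : ℚ_[p]} (hx : x ∈ Ep p) (n : ℕ) : x ^ n ∈ Ep p := by
  induction n with
  | zero => simpa using Ep_one p
  | succ m ih => rw [pow_succ]; exact Ep_mul p ih hx

lemma Ep_inv {x : ℚ_[p]} (hx : x ∈ Ep p) : x⁻¹ ∈ Ep p := by
  obtain ⟨hx1, hx2⟩ := hx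
  have hx0 : x ≠ 0 := by intro h; rw [h] at hx1; simp at hx1
  constructor
  · rw [norm_inv, hx1]; norm_num
  · have : x⁻¹ - 1 = x⁻¹ * (1 - x) := by field_simp
    rw [this, norm_mul, norm_inv, hx1]
    simpa [← norm_neg (1 - x), neg_sub] using hx2

lemma real_pow_eq_one {x : ℝ} {k : ℕ} (hx : 0 ≤ x) (hk : 1 ≤ k) (h : x ^ k = 1) : x = 1 := by
  rcases lt_trichotomy x 1 with h1 | h1 | h1
  · exfalso
    have : x ^ k < 1 := pow_lt_one₀ hx h1 (by omega)
    rw [h] at this; exact lt_irrefl 1 this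
  · exact h1
  · exfalso
    have : 1 < x ^ k := one_lt_pow₀ h1 (by omega)
    rw [h] at this; exact lt_irrefl 1 this

end helpers

lemma norms_key {ip : ℝ} (hip : 0 < ip) (hil : ip < 1) {k : ℕ} (hk : 1 ≤ k)
    {A B C M N : ℝ} (hA : 0 ≤ A) (hB : 0 < B) (hC : 0 < C) (hM : 0 ≤ M)
    (hNge : 1 ≤ N) (hBN : B ≤ N) (hNB : N ≤ max B 1)
    (eq2 : A = (M * B / N) ^ k) (eq3 : B = (N / (C * B)) ^ k)
    (hMle : M ≤ max A 1) (hCle : C ≤ max A 1)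
    (fgt : 1 < A → M = A ∧ C = A)
    (flt : A < 1 → M = 1 ∧ C = 1)
    (fsmall : C < 1 → M ≤ ip) :
    A = 1 ∧ B = 1 ∧ C = 1 ∧ M = 1 ∧ N = 1 := by
  have hN0 : (0:ℝ) < N := lt_of_lt_of_le one_pos hNge
  have prodEq : A * B = (M / C) ^ k := by
    have e : (M * B / N) * (N / (C * B)) = M / C := by
      field_simp
    calc A * B = (M * B / N) ^ k * (N / (C * B)) ^ k := by rw [← eq2, ← eq3]
      _ = (M / C) ^ k := by rw [← mul_pow, e]
  rcases lt_trichotomy A 1 with hA1 | hA1 | hA1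
  · -- A < 1 : contradiction
    exfalso
    obtain ⟨hMA, hCA⟩ := flt hA1
    rw [hMA, hCA] at prodEq
    have hAB : A * B = 1 := by simpa using prodEq
    have hBgt : 1 < B := by nlinarith
    have hNeqB : N = B := le_antisymm (le_trans hNB (by rw [max_eq_left hBgt.le])) hBN
    rw [hCA, hNeqB, one_mul, div_self (ne_of_gt hB), one_pow] at eq3
    exact absurd eq3 (ne_of_gt hBgt)
  · -- A = 1
    subst hA1  -- A is a variable? no, hA1 : A = 1; subst replaces A by 1? A is local var, ok
    have hC1 : C = 1 := by
      by_contra hC1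
      have hClt : C < 1 := lt_of_le_of_ne (le_trans hCle (by simp)) hC1
      have hMip : M ≤ ip := fsmall hClt
      have h1 : (M * B / N) = 1 := by
        refine real_pow_eq_one ?_ hk eq2.symm
        positivity
      have hMval : M * B = N := by
        field_simp at h1; linarith
      have hM1 : 1 ≤ M := by
        nlinarith
      linarith
    rw [hC1, div_one] at prodEq
    have hBM : B = M ^ k := by simpa using prodEq
    have hMle1 : M ≤ 1 := le_trans hMle (by simp)
    have hBle1 : B ≤ 1 := by
      rw [hBM]; exact pow_le_one₀ hM hMle1
    have hN1 : N = 1 := le_antisymm (le_trans hNB (by rw [max_eq_right hBle1])) hNge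
    have hB1 : B = 1 := by
      rw [hN1, hC1, one_mul] at eq3
      have : B ^ (k + 1) = 1 := by
        rw [pow_succ]
        nth_rewrite 2 [eq3]
        rw [← mul_pow]
        rw [mul_one_div, div_self (ne_of_gt hB), one_pow]
      exact real_pow_eq_one hB.le (by omega) this
    have hM1 : M = 1 := real_pow_eq_one hM hk (by rw [← hBM, hB1])
    exact ⟨rfl, hB1, hC1, hM1, hN1⟩
  · -- A > 1 : contradiction
    exfalso
    obtain ⟨hMA, hCA⟩ := fgt hA1
    have hA0 : A ≠ 0 := ne_of_gt (lt_trans one_pos hA1)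
    rw [hMA, hCA, div_self hA0, one_pow] at prodEq
    rw [hMA, prodEq] at eq2
    have hle : (1 / N) ^ k ≤ 1 :=
      pow_le_one₀ (by positivity) (by rw [div_le_one hN0]; exact hNge)
    rw [← eq2] at hle
    linarith
theorem solution_in_Ep_cube (p : ℕ) [Fact p.Prime] (hp : p ≠ 2)
    (k : ℕ) (hk : 1 ≤ k) (a b : ℚ_[p]) (ha : a ∈ Ep p) (hb : b ∈ Ep p)
    (hb1 : b ≠ 1) (u₁ u₂ u₃ : ℚ_[p])
    (hd1 : u₃ + b ^ 2 ≠ 0) (hd2 : u₁ ≠ 0) (hd3 : u₂ + b ^ 2 ≠ 0) (hd4 : u₃ ≠ 0)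
    (h1 : u₁ = a ^ 2 * ((b ^ 2 * u₃ + 1) / (u₃ + b ^ 2)) ^ k)
    (h2 : u₂ = a ^ 2 * ((b ^ 2 * u₂ + 1) * u₃ / ((u₃ + b ^ 2) * u₁)) ^ k)
    (h3 : u₃ = a ^ 2 * ((b ^ 2 * u₃ + 1) * u₁ / ((u₂ + b ^ 2) * u₃)) ^ k)
    (hu3 : ¬ (-u₃ ∈ Ep p)) :
    u₁ ∈ Ep p ∧ u₂ ∈ Ep p ∧ u₃ ∈ Ep p := by
  obtain ⟨han, ham⟩ := ha
  obtain ⟨hbn, hbm⟩ := hb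
  have hp1 := hp_one_lt p
  have hip := inv_p_pos p
  have hil := inv_p_lt_one p
  have h2le : ‖(2 : ℚ_[p])‖ ≤ 1 := by
    have := Padic.norm_int_le_one (p := p) 2
    simpa using this
  have hb2n : ‖b ^ 2‖ = 1 := by rw [norm_pow, hbn, one_pow]
  have hb2sub : ‖b ^ 2 - 1‖ ≤ 1 / p := by
    have e : b ^ 2 - 1 = (b - 1) * (b + 1) := by ring
    have hb1le : ‖b + 1‖ ≤ 1 := by
      have e2 : b + 1 = (b - 1) + 2 := by ring
      rw [e2]
      exact le_trans (Padic.nonarchimedean _ _) (max_le (le_trans hbm hil.le) h2le)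
    rw [e, norm_mul]
    calc ‖b - 1‖ * ‖b + 1‖ ≤ (1 / p) * 1 :=
          mul_le_mul hbm hb1le (norm_nonneg _) hip.le
      _ = 1 / p := by ring
  have hb4sub : ‖b ^ 4 - 1‖ ≤ 1 / p := by
    have e : b ^ 4 - 1 = (b ^ 2 - 1) * (b ^ 2 + 1) := by ring
    have hb2p1 : ‖b ^ 2 + 1‖ ≤ 1 := by
      have e2 : b ^ 2 + 1 = (b ^ 2 - 1) + 2 := by ring
      rw [e2]
      exact le_trans (Padic.nonarchimedean _ _)
        (max_le (le_trans hb2sub hil.le) h2le)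
    rw [e, norm_mul]
    calc ‖b ^ 2 - 1‖ * ‖b ^ 2 + 1‖ ≤ (1 / p) * 1 :=
          mul_le_mul hb2sub hb2p1 (norm_nonneg _) hip.le
      _ = 1 / p := by ring
  -- N := ‖u₃ + 1‖ ≥ 1
  have hNge : 1 ≤ ‖u₃ + 1‖ := by
    by_contra hlt
    push_neg at hlt
    have hNle := padic_norm_dichotomy p _ hlt
    apply hu3
    constructor
    · rw [norm_neg]
      have e : u₃ = (u₃ + 1) + (-1) := by ring
      rw [e, Padic.add_eq_max_of_ne (by rw [norm_neg, norm_one]; exact ne_of_lt hlt),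
        norm_neg, norm_one]
      exact max_eq_right hlt.le
    · have e : -u₃ - 1 = -(u₃ + 1) := by ring
      rw [e, norm_neg]
      exact hNle
  have hN0 : ‖u₃ + 1‖ ≠ 0 := by positivity
  have hB_le : ‖u₃‖ ≤ ‖u₃ + 1‖ := by
    have e : u₃ = (u₃ + 1) + (-1) := by ring
    calc ‖u₃‖ = ‖(u₃ + 1) + (-1)‖ := by rw [← e]
      _ ≤ max ‖u₃ + 1‖ ‖(-1 : ℚ_[p])‖ := Padic.nonarchimedean _ _
      _ ≤ ‖u₃ + 1‖ := by rw [norm_neg, norm_one]; exact max_le le_rfl hNge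
  have hN_le : ‖u₃ + 1‖ ≤ max ‖u₃‖ 1 := by
    calc ‖u₃ + 1‖ ≤ max ‖u₃‖ ‖(1 : ℚ_[p])‖ := Padic.nonarchimedean _ _
      _ = max ‖u₃‖ 1 := by rw [norm_one]
  have hNb : ‖u₃ + b ^ 2‖ = ‖u₃ + 1‖ := by
    have e : u₃ + b ^ 2 = (u₃ + 1) + (b ^ 2 - 1) := by ring
    rw [e, Padic.add_eq_max_of_ne
      (by apply ne_of_gt; calc ‖b ^ 2 - 1‖ ≤ 1 / p := hb2sub
          _ < 1 := hil
          _ ≤ ‖u₃ + 1‖ := hNge)]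
    exact max_eq_left (le_trans hb2sub (le_trans hil.le hNge))
  have hN2 : ‖b ^ 2 * u₃ + 1‖ = ‖u₃ + 1‖ := by
    have e : b ^ 2 * u₃ + 1 = (u₃ + 1) + (b ^ 2 - 1) * u₃ := by ring
    have hsmall : ‖(b ^ 2 - 1) * u₃‖ < ‖u₃ + 1‖ := by
      rw [norm_mul]
      calc ‖b ^ 2 - 1‖ * ‖u₃‖ ≤ (1 / p) * ‖u₃ + 1‖ :=
            mul_le_mul hb2sub hB_le (norm_nonneg _) hip.le
        _ < 1 * ‖u₃ + 1‖ := by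
            apply mul_lt_mul_of_pos_right hil
            exact lt_of_lt_of_le one_pos hNge
        _ = ‖u₃ + 1‖ := one_mul _
    rw [e, Padic.add_eq_max_of_ne (ne_of_gt hsmall)]
    exact max_eq_left hsmall.le
  have hu1n : ‖u₁‖ = 1 := by
    rw [h1, norm_mul, norm_pow, norm_pow, norm_div, hN2, hNb, han,
      div_self hN0, one_pow, one_pow, one_mul]
  -- norm equations for u₂, u₃
  have eq2 : ‖u₂‖ = (‖b ^ 2 * u₂ + 1‖ * ‖u₃‖ / ‖u₃ + 1‖) ^ k := by
    nth_rewrite 1 [h2]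
    rw [norm_mul, norm_pow, han, one_pow, one_mul, norm_pow, norm_div,
      norm_mul, norm_mul, hNb, hu1n, mul_one]
  have eq3 : ‖u₃‖ = (‖u₃ + 1‖ / (‖u₂ + b ^ 2‖ * ‖u₃‖)) ^ k := by
    nth_rewrite 1 [h3]
    rw [norm_mul, norm_pow, han, one_pow, one_mul, norm_pow, norm_div,
      norm_mul, norm_mul, hN2, hu1n, mul_one]
  have hBpos : 0 < ‖u₃‖ := norm_pos_iff.mpr hd4
  have hCpos : 0 < ‖u₂ + b ^ 2‖ := norm_pos_iff.mpr hd3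
  have hMle : ‖b ^ 2 * u₂ + 1‖ ≤ max ‖u₂‖ 1 := by
    calc ‖b ^ 2 * u₂ + 1‖ ≤ max ‖b ^ 2 * u₂‖ ‖(1 : ℚ_[p])‖ := Padic.nonarchimedean _ _
      _ = max ‖u₂‖ 1 := by rw [norm_mul, hb2n, one_mul, norm_one]
  have hCle : ‖u₂ + b ^ 2‖ ≤ max ‖u₂‖ 1 := by
    calc ‖u₂ + b ^ 2‖ ≤ max ‖u₂‖ ‖b ^ 2‖ := Padic.nonarchimedean _ _
      _ = max ‖u₂‖ 1 := by rw [hb2n]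
  have fgt : 1 < ‖u₂‖ → ‖b ^ 2 * u₂ + 1‖ = ‖u₂‖ ∧ ‖u₂ + b ^ 2‖ = ‖u₂‖ := by
    intro hgt
    constructor
    · rw [Padic.add_eq_max_of_ne (by rw [norm_mul, hb2n, one_mul, norm_one]; exact ne_of_gt hgt),
        norm_mul, hb2n, one_mul, norm_one]
      exact max_eq_left hgt.le
    · rw [Padic.add_eq_max_of_ne (by rw [hb2n]; exact ne_of_gt hgt), hb2n]
      exact max_eq_left hgt.le
  have flt : ‖u₂‖ < 1 → ‖b ^ 2 * u₂ + 1‖ = 1 ∧ ‖u₂ + b ^ 2‖ = 1 := by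
    intro hlt
    constructor
    · rw [Padic.add_eq_max_of_ne (by rw [norm_mul, hb2n, one_mul, norm_one]; exact ne_of_lt hlt),
        norm_mul, hb2n, one_mul, norm_one]
      exact max_eq_right hlt.le
    · rw [Padic.add_eq_max_of_ne (by rw [hb2n]; exact ne_of_lt hlt), hb2n]
      exact max_eq_right hlt.le
  have fsmall : ‖u₂ + b ^ 2‖ < 1 → ‖b ^ 2 * u₂ + 1‖ ≤ 1 / p := by
    intro hlt
    have hCd := padic_norm_dichotomy p _ hlt
    have e : b ^ 2 * u₂ + 1 = b ^ 2 * (u₂ + b ^ 2) + (1 - b ^ 4) := by ring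
    rw [e]
    refine le_trans (Padic.nonarchimedean _ _) (max_le ?_ ?_)
    · rw [norm_mul, hb2n, one_mul]; exact hCd
    · rw [show (1 : ℚ_[p]) - b ^ 4 = -(b ^ 4 - 1) by ring, norm_neg]; exact hb4sub
  obtain ⟨hA1, hB1, hC1, hM1, hN1⟩ :=
    norms_key hip hil hk (norm_nonneg u₂) hBpos hCpos (norm_nonneg _)
      hNge hB_le hN_le eq2 eq3 hMle hCle fgt flt fsmall
  -- now all relevant norms are 1
  have hNb1 : ‖u₃ + b ^ 2‖ = 1 := by rw [hNb, hN1]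
  have hN21 : ‖b ^ 2 * u₃ + 1‖ = 1 := by rw [hN2, hN1]
  -- u₁ ∈ Ep
  have hr : (b ^ 2 * u₃ + 1) / (u₃ + b ^ 2) ∈ Ep p := by
    constructor
    · rw [norm_div, hN21, hNb1, div_one]
    · have e : (b ^ 2 * u₃ + 1) / (u₃ + b ^ 2) - 1 = (b ^ 2 - 1) * (u₃ - 1) / (u₃ + b ^ 2) := by
        field_simp
        try ring
      rw [e, norm_div, hNb1, div_one, norm_mul]
      have hu31 : ‖u₃ - 1‖ ≤ 1 := by
        calc ‖u₃ - 1‖ = ‖u₃ + (-1)‖ := by ring_nf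
          _ ≤ max ‖u₃‖ ‖(-1 : ℚ_[p])‖ := Padic.nonarchimedean _ _
          _ ≤ 1 := by rw [norm_neg, norm_one, hB1]; exact max_le le_rfl le_rfl
      calc ‖b ^ 2 - 1‖ * ‖u₃ - 1‖ ≤ (1 / p) * 1 :=
            mul_le_mul hb2sub hu31 (norm_nonneg _) hip.le
        _ = 1 / p := by ring
  have hu1 : u₁ ∈ Ep p := by
    rw [h1]
    exact Ep_mul p (Ep_pow p ⟨han, ham⟩ 2) (Ep_pow p hr k)
  -- u₂u₃ ∈ Ep
  have hst : (b ^ 2 * u₂ + 1) * (b ^ 2 * u₃ + 1) / ((u₃ + b ^ 2) * (u₂ + b ^ 2)) ∈ Ep p := by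
    constructor
    · rw [norm_div, norm_mul, norm_mul, hM1, hN21, hNb1, hC1]
      norm_num
    · have e : (b ^ 2 * u₂ + 1) * (b ^ 2 * u₃ + 1) / ((u₃ + b ^ 2) * (u₂ + b ^ 2)) - 1
          = (b ^ 4 - 1) * (u₂ * u₃ - 1) / ((u₃ + b ^ 2) * (u₂ + b ^ 2)) := by
        field_simp
        try ring
      rw [e, norm_div, norm_mul, norm_mul, hNb1, hC1, mul_one, div_one]
      have h23 : ‖u₂ * u₃ - 1‖ ≤ 1 := by
        calc ‖u₂ * u₃ - 1‖ = ‖u₂ * u₃ + (-1)‖ := by ring_nf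
          _ ≤ max ‖u₂ * u₃‖ ‖(-1 : ℚ_[p])‖ := Padic.nonarchimedean _ _
          _ ≤ 1 := by
              rw [norm_neg, norm_one, norm_mul, hA1, hB1, one_mul]
              exact max_le le_rfl le_rfl
      calc ‖b ^ 4 - 1‖ * ‖u₂ * u₃ - 1‖ ≤ (1 / p) * 1 :=
            mul_le_mul hb4sub h23 (norm_nonneg _) hip.le
        _ = 1 / p := by ring
  have hu23 : u₂ * u₃ ∈ Ep p := by
    have e0 : u₂ * u₃ = (a ^ 2 * ((b ^ 2 * u₂ + 1) * u₃ / ((u₃ + b ^ 2) * u₁)) ^ k)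
        * (a ^ 2 * ((b ^ 2 * u₃ + 1) * u₁ / ((u₂ + b ^ 2) * u₃)) ^ k) := by
      rw [← h2, ← h3]
    have hstid : ((b ^ 2 * u₂ + 1) * u₃ / ((u₃ + b ^ 2) * u₁)) *
        ((b ^ 2 * u₃ + 1) * u₁ / ((u₂ + b ^ 2) * u₃))
        = (b ^ 2 * u₂ + 1) * (b ^ 2 * u₃ + 1) / ((u₃ + b ^ 2) * (u₂ + b ^ 2)) := by
      field_simp
    have e1 : u₂ * u₃ = (a ^ 2 * a ^ 2) *
        ((b ^ 2 * u₂ + 1) * (b ^ 2 * u₃ + 1) / ((u₃ + b ^ 2) * (u₂ + b ^ 2))) ^ k := by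
      rw [e0, ← hstid, mul_pow]
      ring
    rw [e1]
    exact Ep_mul p (Ep_mul p (Ep_pow p ⟨han, ham⟩ 2) (Ep_pow p ⟨han, ham⟩ 2)) (Ep_pow p hst k)
  -- s ∈ Ep, hence u₂ ∈ Ep
  have hs : (b ^ 2 * u₂ + 1) * u₃ / ((u₃ + b ^ 2) * u₁) ∈ Ep p := by
    constructor
    · rw [norm_div, norm_mul, norm_mul, hM1, hB1, hNb1, hu1n]
      norm_num
    · have e : (b ^ 2 * u₂ + 1) * u₃ / ((u₃ + b ^ 2) * u₁) - 1
          = (b ^ 2 * (u₂ * u₃ - 1) - (u₃ + b ^ 2) * (u₁ - 1)) / ((u₃ + b ^ 2) * u₁) := by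
        field_simp
        try ring
      rw [e, norm_div, norm_mul, hNb1, hu1n, one_mul, div_one, sub_eq_add_neg]
      refine le_trans (Padic.nonarchimedean _ _) (max_le ?_ ?_)
      · rw [norm_mul, hb2n, one_mul]
        exact hu23.2
      · rw [norm_neg, norm_mul, hNb1, one_mul]
        exact hu1.2
  have hu2 : u₂ ∈ Ep p := by
    rw [h2]
    exact Ep_mul p (Ep_pow p ⟨han, ham⟩ 2) (Ep_pow p hs k)
  have hu3' : u₃ ∈ Ep p := by
    have hu2ne : u₂ ≠ 0 := by
      intro h
      rw [h, norm_zero] at hA1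
      norm_num at hA1
    have e : u₃ = (u₂ * u₃) * u₂⁻¹ := by
      field_simp
    rw [e]
    exact Ep_mul p hu23 (Ep_inv p hu2)
  exact ⟨hu1, hu2, hu3'⟩
end
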